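/- Let V be a finite-dimensional real inner product space and f : V → ℝ a convex function. If for every ξ ∈ V \ {0} the maximal weight λ_f(ξ) = lim_{t→+∞} d/dt f(tξ) is strictly positive, then f is an exhaustion function (f(v) → ∞ as ‖v‖ → ∞), and consequently f attains a global minimum. -/

import Mathlib

open RealInnerProductSpace Filter

/-- If `f : V → ℝ` is convex and for every nonzero direction `ξ` the maximal weight
`λ_f(ξ) = lim_{t → ∞} (d/dt) f(tξ)` is strictly positive, then `f` is an exhaustion
(it tends to `+∞` at infinity) and attains a global minimum. -/
theorem convex_exhaustion_of_positive_maximal_weights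
    (V : Type*) [NormedAddCommGroup V] [InnerProductSpace ℝ V] [FiniteDimensional ℝ V]
    (f : V → ℝ) (hconv : ConvexOn ℝ Set.univ f)
    (hdiff : ∀ (ξ : V) (t : ℝ), DifferentiableAt ℝ (fun s : ℝ => f (s • ξ)) t)
    (hpos : ∀ ξ : V, ξ ≠ 0 → ∃ c > (0 : ℝ), ∃ T : ℝ, ∀ t ≥ T,
      c ≤ deriv (fun s : ℝ => f (s • ξ)) t) :
    Tendsto f (Bornology.cobounded V) atTop ∧ ∃ v : V, ∀ w : V, f v ≤ f w := by
  have hcont : Continuous f := by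
    rw [← continuousOn_univ]
    exact hconv.continuousOn isOpen_univ
  -- Step 1: along every nonzero ray, `f` eventually exceeds `f 0 + 1`.
  have hray : ∀ ξ : V, ξ ≠ 0 → ∃ s : ℝ, 0 < s ∧ f 0 + 1 ≤ f (s • ξ) := by
    intro ξ hξ
    obtain ⟨c, hc, T, hT⟩ := hpos ξ hξ
    set g : ℝ → ℝ := fun s => f (s • ξ) with hg
    have hgd : ∀ t, DifferentiableAt ℝ g t := hdiff ξ
    have key := (convex_Ici T).mul_sub_le_image_sub_of_le_deriv
      (f := g) (C := c)
      (fun x _ => (hgd x).continuousAt.continuousWithinAt)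
      (fun x _ => (hgd x).differentiableWithinAt)
      (fun x hx => hT x (le_of_lt (by simpa [interior_Ici] using hx)))
    set y := max (max T 1) (T + (f 0 + 1 - g T) / c) with hy
    have hyT : T ≤ y := le_trans (le_max_left T 1) (le_max_left _ _)
    have hy1 : (1 : ℝ) ≤ y := le_trans (le_max_right T 1) (le_max_left _ _)
    have h1 : c * (y - T) ≤ g y - g T :=
      key T Set.self_mem_Ici y hyT hyT
    have h2 : T + (f 0 + 1 - g T) / c ≤ y := le_max_right _ _
    have h3 : (f 0 + 1 - g T) / c * c = f 0 + 1 - g T := div_mul_cancel₀ _ hc.ne'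
    refine ⟨y, by linarith, ?_⟩
    have : f 0 + 1 - g T ≤ c * (y - T) := by nlinarith
    have : f 0 + 1 ≤ g y := by linarith
    simpa [hg] using this
  -- Step 2: a uniform coercivity bound, via compactness of the unit sphere.
  obtain ⟨S, hS, hbound⟩ :
      ∃ S : ℝ, 0 < S ∧ ∀ v : V, S ≤ ‖v‖ → f 0 + ‖v‖ / (2 * S) ≤ f v := by
    choose! s hs hfs using hray
    have hne : ∀ ξ : V, ξ ∈ Metric.sphere (0 : V) 1 → ξ ≠ 0 := by
      intro ξ hξ h0
      rw [mem_sphere_zero_iff_norm] at hξ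
      simp [h0] at hξ
    set U : Metric.sphere (0 : V) 1 → Set V :=
      fun ξ => {η : V | f 0 + 1 / 2 < f (s ξ.1 • η)} with hU
    have hUopen : ∀ ξ, IsOpen (U ξ) := by
      intro ξ
      exact isOpen_lt continuous_const (hcont.comp (continuous_const_smul _))
    have hcover : Metric.sphere (0 : V) 1 ⊆ ⋃ ξ, U ξ := by
      intro ξ hξ
      refine Set.mem_iUnion.2 ⟨⟨ξ, hξ⟩, ?_⟩
      have := hfs ξ (hne ξ hξ)
      simp only [hU, Set.mem_setOf_eq]
      linarith
    obtain ⟨F, hF⟩ := (isCompact_sphere (0 : V) 1).elim_finite_subcover U hUopen hcover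
    have hsum_nonneg : (0 : ℝ) ≤ ∑ i ∈ F, s i.1 := by
      refine Finset.sum_nonneg fun i _ => (hs i.1 (hne i.1 i.2)).le
    refine ⟨1 + ∑ i ∈ F, s i.1, by linarith, ?_⟩
    set S := 1 + ∑ i ∈ F, s i.1 with hSdef
    have hS1 : (1 : ℝ) ≤ S := by rw [hSdef]; linarith
    intro v hv
    have hvpos : 0 < ‖v‖ := lt_of_lt_of_le (by linarith) hv
    have hv0 : v ≠ 0 := by simpa [norm_pos_iff] using hvpos
    have hηsphere : (‖v‖⁻¹ • v) ∈ Metric.sphere (0 : V) 1 := by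
      rw [mem_sphere_zero_iff_norm, norm_smul, norm_inv, norm_norm,
        inv_mul_cancel₀ hvpos.ne']
    obtain ⟨i, hiF, hi⟩ : ∃ i ∈ F, (‖v‖⁻¹ • v) ∈ U i := by
      have := hF hηsphere
      simpa using this
    have hspos : 0 < s i.1 := hs i.1 (hne i.1 i.2)
    have hsleS : s i.1 ≤ S := by
      have : s i.1 ≤ ∑ j ∈ F, s j.1 := Finset.single_le_sum
        (fun j _ => (hs j.1 (hne j.1 j.2)).le) hiF
      rw [hSdef]; linarith
    have hsle : s i.1 ≤ ‖v‖ := hsleS.trans hv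
    -- convexity bound
    have hi' : f 0 + 1 / 2 < f (s i.1 • (‖v‖⁻¹ • v)) := hi
    set a : ℝ := s i.1 / ‖v‖ with ha
    have ha0 : 0 ≤ a := by positivity
    have ha1 : a ≤ 1 := div_le_one_of_le₀ hsle hvpos.le
    have hcx := hconv.2 (Set.mem_univ v) (Set.mem_univ (0 : V)) ha0
      (by linarith : (0:ℝ) ≤ 1 - a) (by ring)
    have hav : a • v + (1 - a) • (0 : V) = s i.1 • (‖v‖⁻¹ • v) := by
      rw [smul_smul, smul_zero, add_zero, ha, div_eq_mul_inv]
    rw [hav] at hcx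
    -- combine
    have h4 : f 0 + 1 / 2 < a * f v + (1 - a) * f 0 := lt_of_lt_of_le hi' hcx
    have h5 : a * ‖v‖ = s i.1 := by rw [ha]; field_simp
    have h6 : s i.1 * (f v - f 0) > ‖v‖ / 2 := by nlinarith
    have h7 : 0 < f v - f 0 := by nlinarith
    have : ‖v‖ / (2 * S) ≤ f v - f 0 := by
      rw [div_le_iff₀ (by positivity)]
      nlinarith
    linarith
  -- Step 3: conclude.
  have htend : Tendsto f (Bornology.cobounded V) atTop := by
    have h1 : Tendsto (fun v : V => f 0 + ‖v‖ / (2 * S)) (Bornology.cobounded V) atTop := by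
      apply tendsto_atTop_add_const_left
      exact Tendsto.atTop_div_const (by positivity) tendsto_norm_cobounded_atTop
    refine tendsto_atTop_mono' _ ?_ h1
    filter_upwards [tendsto_norm_cobounded_atTop.eventually_ge_atTop S] with v hv
    exact hbound v hv
  refine ⟨htend, ?_⟩
  exact hcont.exists_forall_le (by rwa [← Metric.cobounded_eq_cocompact])
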